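/- The number of ways to factor a fixed d-cycle in S_d as a product of d−1 transpositions is d^{d−2}. -/

import Mathlib

set_option linter.unusedSectionVars false

namespace Denes
open Equiv Equiv.Perm Finset

variable {α : Type*} [Fintype α] [DecidableEq α]


/-- The orbit ("cycle class") of `x` under `σ`, as a `Finset`. -/
def cls (σ : Perm α) (x : α) : Finset α := univ.filter (σ.SameCycle x)

/-- The set of orbits of `σ`. -/
def orbs (σ : Perm α) : Finset (Finset α) := univ.image (cls σ)

/-- Number of orbits (cycles including fixed points). -/
def nOrb (σ : Perm α) : ℕ := (orbs σ).card

/-- Product of orbit sizes. -/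
def pOrb (σ : Perm α) : ℕ := ∏ s ∈ orbs σ, s.card

lemma mem_cls {σ : Perm α} {x y : α} : y ∈ cls σ x ↔ σ.SameCycle x y := by
  simp [cls]

lemma self_mem_cls {σ : Perm α} (x : α) : x ∈ cls σ x := mem_cls.2 (SameCycle.refl σ x)

lemma cls_eq_cls {σ : Perm α} {x y : α} : cls σ x = cls σ y ↔ σ.SameCycle x y := by
  constructor
  · intro h
    have := self_mem_cls (σ := σ) y
    rw [← h, mem_cls] at this
    exact this
  · intro h
    ext z
    simp only [mem_cls]
    exact ⟨fun hz => h.symm.trans hz, fun hz => h.trans hz⟩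

lemma cls_mem_orbs (σ : Perm α) (x : α) : cls σ x ∈ orbs σ :=
  mem_image_of_mem _ (mem_univ x)

lemma eq_cls_of_mem {σ : Perm α} {S : Finset α} (hS : S ∈ orbs σ) {x : α} (hx : x ∈ S) :
    S = cls σ x := by
  obtain ⟨y, -, rfl⟩ := mem_image.1 hS
  exact cls_eq_cls.2 (mem_cls.1 hx)



/-- If `a` and `b` are in different orbits of `σ`, then they are in the same orbit
of `σ * swap a b`. -/
lemma sameCycle_mul_swap (σ : Perm α) {a b : α} (h : ¬σ.SameCycle a b) :
    (σ * Equiv.swap a b).SameCycle a b := by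
  have hex : ∃ m, 0 < m ∧ (σ ^ m) b = b :=
    ⟨orderOf σ, orderOf_pos σ, by rw [pow_orderOf_eq_one]; rfl⟩
  set m := Nat.find hex with hm
  obtain ⟨hm0, hmb⟩ : 0 < m ∧ (σ ^ m) b = b := Nat.find_spec hex
  have key : ∀ k, 1 ≤ k → k ≤ m → ((σ * Equiv.swap a b) ^ k) a = (σ ^ k) b := by
    intro k hk1 hkm
    induction k with
    | zero => omega
    | succ n ih =>
      rcases Nat.eq_or_lt_of_le hk1 with h1 | h1
      · rw [← h1]
        simp [mul_apply, Equiv.swap_apply_left]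
      · have hn1 : 1 ≤ n := by omega
        have hnm : n ≤ m := by omega
        have ihn := ih hn1 hnm
        have hnb : (σ ^ n) b ≠ b := by
          intro hb
          exact (Nat.find_min hex (show n < m by omega)) ⟨by omega, hb⟩
        have hna : (σ ^ n) b ≠ a := by
          intro hb
          exact h (SameCycle.symm ⟨(n : ℤ), by rw [zpow_natCast, hb]⟩)
        rw [pow_succ', mul_apply, ihn, mul_apply,
          Equiv.swap_apply_of_ne_of_ne hna hnb, pow_succ', mul_apply]
  exact ⟨(m : ℤ), by rw [zpow_natCast, key m hm0 le_rfl, hmb]⟩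

omit [Fintype α] [DecidableEq α] in
/-- period reduction -/
lemma pow_mod_period {f : Perm α} {x : α} {p : ℕ} (hp : 0 < p) (hfix : (f ^ p) x = x) :
    ∀ k, (f ^ k) x = (f ^ (k % p)) x := by
  intro k
  induction k using Nat.strong_induction_on with
  | _ k ih =>
    by_cases hk : k < p
    · rw [Nat.mod_eq_of_lt hk]
    · push_neg at hk
      have h1 : (f ^ k) x = (f ^ (k - p)) x := by
        have hkp : k = (k - p) + p := by omega
        conv_lhs => rw [hkp]
        rw [pow_add, mul_apply, hfix]
      rw [h1, ih (k - p) (by omega), Nat.mod_eq_sub_mod hk]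

/-- If `a ≠ b` are in the same orbit of `σ`, they are in different orbits of
`σ * swap a b`. -/
lemma not_sameCycle_mul_swap (σ : Perm α) {a b : α} (hab : a ≠ b) (h : σ.SameCycle a b) :
    ¬(σ * Equiv.swap a b).SameCycle a b := by
  have hexm : ∃ m, 0 < m ∧ (σ ^ m) a = a :=
    ⟨orderOf σ, orderOf_pos σ, by rw [pow_orderOf_eq_one]; rfl⟩
  set m := Nat.find hexm with hmdef
  obtain ⟨hm0, hma⟩ : 0 < m ∧ (σ ^ m) a = a := Nat.find_spec hexm
  have hext : ∃ t, 0 < t ∧ (σ ^ t) a = b := by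
    obtain ⟨i, -, hi⟩ := h.exists_pow_eq'
    rcases Nat.eq_zero_or_pos i with rfl | hi0
    · simp at hi; exact absurd hi hab
    · exact ⟨i, hi0, hi⟩
  set t := Nat.find hext with htdef
  obtain ⟨ht0, hta⟩ : 0 < t ∧ (σ ^ t) a = b := Nat.find_spec hext
  -- minimality consequences
  have hlt : ∀ k, 0 < k → k < m → (σ ^ k) a ≠ a := fun k hk0 hkm hk =>
    (Nat.find_min hexm hkm) ⟨hk0, hk⟩
  have htm : t < m := by
    rcases lt_or_ge t m with h' | h'
    · exact h'
    · exfalso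
      rcases Nat.eq_or_lt_of_le h' with h'' | h''
      · exact hab (by rw [← hta, ← h'', hma])
      · refine (Nat.find_min hext (show t - m < t by omega)) ⟨by omega, ?_⟩
        have htm' : t = (t - m) + m := by omega
        rw [← hta]
        conv_rhs => rw [htm']
        rw [pow_add, mul_apply, hma]
  set f := σ * Equiv.swap a b with hf
  have key : ∀ k, 1 ≤ k → k ≤ m - t → (f ^ k) a = (σ ^ (t + k)) a := by
    intro k hk1 hkm
    induction k with
    | zero => omega
    | succ n ih =>
      rcases Nat.eq_or_lt_of_le hk1 with h1 | h1
      · rw [← h1]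
        have : f a = σ b := by simp [hf, mul_apply, Equiv.swap_apply_left]
        rw [pow_one, this, ← hta, ← mul_apply, ← pow_succ']
      · have hn1 : 1 ≤ n := by omega
        have hnm : n ≤ m - t := by omega
        have ihn := ih hn1 hnm
        have hxa : (σ ^ (t + n)) a ≠ a := hlt (t + n) (by omega) (by omega)
        have hxb : (σ ^ (t + n)) a ≠ b := by
          intro hb
          rw [← hta] at hb
          have : (σ ^ n) a = a := by
            have := congrArg (fun z => ((σ ^ t)⁻¹) z) hb
            simpa [pow_add, mul_apply] using this
          exact hlt n (by omega) (by omega) this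
        rw [pow_succ', mul_apply, ihn, hf, mul_apply,
          Equiv.swap_apply_of_ne_of_ne hxa hxb, ← mul_apply, ← pow_succ']
        congr 2 <;> omega
  have hclose : (f ^ (m - t)) a = a := by
    rw [key (m - t) (by omega) le_rfl]
    have : t + (m - t) = m := by omega
    rw [this, hma]
  intro hcon
  obtain ⟨i, -, hi⟩ := hcon.exists_pow_eq'
  rw [pow_mod_period (show 0 < m - t by omega) hclose i] at hi
  set r := i % (m - t) with hr
  have hrlt : r < m - t := Nat.mod_lt _ (by omega)
  rcases Nat.eq_zero_or_pos r with h0 | hr0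
  · rw [h0] at hi; simp at hi; exact hab hi
  · rw [key r hr0 (by omega)] at hi
    rw [← hta] at hi
    have : (σ ^ r) a = a := by
      have := congrArg (fun z => ((σ ^ t)⁻¹) z) hi
      simpa [pow_add, mul_apply] using this
    exact hlt r hr0 (by omega) this


-- ## The join relation

/-- The join of `SameCycle σ` with the pair `(a, b)`. -/
def Rel (σ : Perm α) (a b x y : α) : Prop :=
  σ.SameCycle x y ∨
    ((σ.SameCycle x a ∨ σ.SameCycle x b) ∧ (σ.SameCycle y a ∨ σ.SameCycle y b))

instance (σ : Perm α) (a b : α) : DecidableRel (Rel σ a b) := fun _ _ =>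
  inferInstanceAs (Decidable (_ ∨ _))

lemma rel_refl (σ : Perm α) (a b x : α) : Rel σ a b x x := Or.inl (SameCycle.refl σ x)

lemma rel_symm {σ : Perm α} {a b x y : α} (h : Rel σ a b x y) : Rel σ a b y x := by
  rcases h with h | ⟨h1, h2⟩
  · exact Or.inl h.symm
  · exact Or.inr ⟨h2, h1⟩

lemma rel_trans {σ : Perm α} {a b x y z : α} (h1 : Rel σ a b x y) (h2 : Rel σ a b y z) :
    Rel σ a b x z := by
  rcases h1 with h1 | ⟨ha1, hb1⟩
  · rcases h2 with h2 | ⟨ha2, hb2⟩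
    · exact Or.inl (h1.trans h2)
    · refine Or.inr ⟨?_, hb2⟩
      rcases ha2 with h' | h'
      · exact Or.inl (h1.trans h')
      · exact Or.inr (h1.trans h')
  · rcases h2 with h2 | ⟨ha2, hb2⟩
    · refine Or.inr ⟨ha1, ?_⟩
      rcases hb1 with h' | h'
      · exact Or.inl (h2.symm.trans h')
      · exact Or.inr (h2.symm.trans h')
    · exact Or.inr ⟨ha1, hb2⟩

/-- Induction along powers in a `SameCycle` proof. -/
lemma sameCycle_rec {f : Perm α} {R : α → α → Prop}
    (htrans : ∀ {x y z}, R x y → R y z → R x z) (hrefl : ∀ x, R x x)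
    (hstep : ∀ x, R x (f x)) {x y : α} (h : f.SameCycle x y) : R x y := by
  obtain ⟨i, -, hxy⟩ := h.exists_pow_eq'
  subst hxy
  clear h
  induction i with
  | zero => simpa using hrefl x
  | succ n ih =>
    have h2 := hstep ((f ^ n) x)
    rw [← mul_apply, ← pow_succ'] at h2
    exact htrans ih h2

lemma rel_step (σ : Perm α) (a b : α) : ∀ x, Rel σ a b x ((σ * Equiv.swap a b) x) := by
  intro x
  by_cases hxa : x = a
  · subst hxa
    rw [mul_apply, Equiv.swap_apply_left]
    exact Or.inr ⟨Or.inl (SameCycle.refl σ x), Or.inr (sameCycle_apply_left.2 (SameCycle.refl σ b))⟩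
  · by_cases hxb : x = b
    · subst hxb
      rw [mul_apply, Equiv.swap_apply_right]
      exact Or.inr ⟨Or.inr (SameCycle.refl σ x), Or.inl (sameCycle_apply_left.2 (SameCycle.refl σ a))⟩
    · rw [mul_apply, Equiv.swap_apply_of_ne_of_ne hxa hxb]
      exact Or.inl (sameCycle_apply_right.2 (SameCycle.refl σ x))

lemma rel_of_sameCycle_mul_swap {σ : Perm α} {a b x y : α}
    (h : (σ * Equiv.swap a b).SameCycle x y) : Rel σ a b x y :=
  sameCycle_rec (R := Rel σ a b) (fun h1 h2 => rel_trans h1 h2) (rel_refl σ a b) (rel_step σ a b) h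

-- merge case
lemma step_mono {σ : Perm α} {a b : α} (h : ¬σ.SameCycle a b) :
    ∀ x, (σ * Equiv.swap a b).SameCycle x (σ x) := by
  intro x
  have hab : (σ * Equiv.swap a b).SameCycle a b := sameCycle_mul_swap σ h
  have hfa : (σ * Equiv.swap a b) a = σ b := by rw [mul_apply, Equiv.swap_apply_left]
  have hfb : (σ * Equiv.swap a b) b = σ a := by rw [mul_apply, Equiv.swap_apply_right]
  by_cases hxa : x = a
  · subst hxa
    exact hab.trans (hfb ▸ sameCycle_apply_right.2 (SameCycle.refl _ b))
  · by_cases hxb : x = b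
    · subst hxb
      exact hab.symm.trans (hfa ▸ sameCycle_apply_right.2 (SameCycle.refl _ a))
    · have : (σ * Equiv.swap a b) x = σ x := by
        rw [mul_apply, Equiv.swap_apply_of_ne_of_ne hxa hxb]
      exact this ▸ sameCycle_apply_right.2 (SameCycle.refl _ x)

lemma sameCycle_mono {σ : Perm α} {a b x y : α} (h : ¬σ.SameCycle a b)
    (hxy : σ.SameCycle x y) : (σ * Equiv.swap a b).SameCycle x y :=
  sameCycle_rec (R := (σ * Equiv.swap a b).SameCycle) (fun h1 h2 => h1.trans h2) (SameCycle.refl _) (step_mono h) hxy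

/-- In the merge case, the orbit relation of `σ * swap a b` is exactly the join. -/
lemma sameCycle_mul_swap_iff {σ : Perm α} {a b : α} (h : ¬σ.SameCycle a b) {x y : α} :
    (σ * Equiv.swap a b).SameCycle x y ↔ Rel σ a b x y := by
  constructor
  · exact rel_of_sameCycle_mul_swap
  · rintro (hxy | ⟨hx, hy⟩)
    · exact sameCycle_mono h hxy
    · have hab := sameCycle_mul_swap σ h
      have hx' : (σ * Equiv.swap a b).SameCycle x a :=
        hx.elim (fun h' => sameCycle_mono h h') (fun h' => (sameCycle_mono h h').trans hab.symm)
      have hy' : (σ * Equiv.swap a b).SameCycle y a :=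
        hy.elim (fun h' => sameCycle_mono h h') (fun h' => (sameCycle_mono h h').trans hab.symm)
      exact hx'.trans hy'.symm

-- ## Rel classes
/-- Class of `x` under the join relation. -/
def clsR (σ : Perm α) (a b x : α) : Finset α := univ.filter (Rel σ a b x)

lemma mem_clsR {σ : Perm α} {a b x y : α} : y ∈ clsR σ a b x ↔ Rel σ a b x y := by
  simp [clsR]

lemma clsR_of_mem {σ : Perm α} {a b x : α} (hx : x ∈ cls σ a ∪ cls σ b) :
    clsR σ a b x = cls σ a ∪ cls σ b := by
  have hx' : σ.SameCycle x a ∨ σ.SameCycle x b := by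
    rcases mem_union.1 hx with h' | h'
    · exact Or.inl (mem_cls.1 h').symm
    · exact Or.inr (mem_cls.1 h').symm
  ext y
  rw [mem_clsR, mem_union, mem_cls, mem_cls]
  constructor
  · rintro (hxy | ⟨-, hy⟩)
    · rcases hx' with h' | h'
      · exact Or.inl (h'.symm.trans hxy)
      · exact Or.inr (h'.symm.trans hxy)
    · rcases hy with h' | h'
      · exact Or.inl h'.symm
      · exact Or.inr h'.symm
  · intro hy
    refine Or.inr ⟨hx', ?_⟩
    rcases hy with h' | h'
    · exact Or.inl h'.symm
    · exact Or.inr h'.symm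

lemma clsR_of_not_mem {σ : Perm α} {a b x : α} (hx : x ∉ cls σ a ∪ cls σ b) :
    clsR σ a b x = cls σ x := by
  rw [mem_union, mem_cls, mem_cls] at hx
  push_neg at hx
  ext y
  rw [mem_clsR, mem_cls]
  constructor
  · rintro (hxy | ⟨hx', -⟩)
    · exact hxy
    · rcases hx' with h' | h'
      · exact absurd h'.symm hx.1
      · exact absurd h'.symm hx.2
  · exact fun hxy => Or.inl hxy

/-- The classes of the join relation. -/
def orbsR (σ : Perm α) (a b : α) : Finset (Finset α) := univ.image (clsR σ a b)

lemma orbsR_eq (σ : Perm α) (a b : α) :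
    orbsR σ a b =
      insert (cls σ a ∪ cls σ b) (((orbs σ).erase (cls σ a)).erase (cls σ b)) := by
  ext S
  constructor
  · intro hS
    obtain ⟨x, -, rfl⟩ := mem_image.1 hS
    by_cases hx : x ∈ cls σ a ∪ cls σ b
    · exact mem_insert.2 (Or.inl (clsR_of_mem hx))
    · refine mem_insert.2 (Or.inr ?_)
      rw [clsR_of_not_mem hx]
      rw [mem_union] at hx
      push_neg at hx
      refine mem_erase.2 ⟨?_, mem_erase.2 ⟨?_, cls_mem_orbs σ x⟩⟩
      · intro hcon
        exact hx.2 (hcon ▸ self_mem_cls x)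
      · intro hcon
        exact hx.1 (hcon ▸ self_mem_cls x)
  · intro hS
    rcases mem_insert.1 hS with rfl | hS'
    · exact mem_image.2 ⟨a, mem_univ a,
        clsR_of_mem (mem_union_left _ (self_mem_cls a))⟩
    · obtain ⟨hSb, hSa, hSo⟩ : S ≠ cls σ b ∧ S ≠ cls σ a ∧ S ∈ orbs σ := by
        have h1 := mem_erase.1 hS'
        have h2 := mem_erase.1 h1.2
        exact ⟨h1.1, h2.1, h2.2⟩
      obtain ⟨x, -, rfl⟩ := mem_image.1 hSo
      have hx : x ∉ cls σ a ∪ cls σ b := by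
        rw [mem_union]
        rintro (h' | h')
        · exact hSa (cls_eq_cls.2 (mem_cls.1 h').symm)
        · exact hSb (cls_eq_cls.2 (mem_cls.1 h').symm)
      exact mem_image.2 ⟨x, mem_univ x, clsR_of_not_mem hx⟩

lemma union_not_mem_erase (σ : Perm α) (a b : α) :
    cls σ a ∪ cls σ b ∉ ((orbs σ).erase (cls σ a)).erase (cls σ b) := by
  intro hmem
  have h1 := mem_erase.1 hmem
  have h2 := mem_erase.1 h1.2
  have hmem' : a ∈ cls σ a ∪ cls σ b := mem_union_left _ (self_mem_cls a)
  have := eq_cls_of_mem h2.2 hmem'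
  exact h2.1 this

lemma card_orbsR (σ : Perm α) (a b : α) :
    (orbsR σ a b).card = (((orbs σ).erase (cls σ a)).erase (cls σ b)).card + 1 := by
  rw [orbsR_eq, card_insert_of_notMem (union_not_mem_erase σ a b)]


-- ## Counting orbits

lemma nOrb_le_mul_swap (σ : Perm α) (a b : α) :
    nOrb σ ≤ nOrb (σ * Equiv.swap a b) + 1 := by
  have h1 : (orbs σ).card ≤ (((orbs σ).erase (cls σ a)).erase (cls σ b)).card + 2 := by
    have e1 := Finset.pred_card_le_card_erase (s := orbs σ) (a := cls σ a)
    have e2 := Finset.pred_card_le_card_erase (s := (orbs σ).erase (cls σ a)) (a := cls σ b)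
    omega
  have h2 : (orbsR σ a b).card ≤ nOrb (σ * Equiv.swap a b) := by
    have hsurj : Set.SurjOn
        (fun S : Finset α => univ.filter (fun y => ∃ x ∈ S, Rel σ a b x y))
        ↑(orbs (σ * Equiv.swap a b)) ↑(orbsR σ a b) := by
      intro S hS
      simp only [Finset.coe_image, Set.mem_image, Finset.mem_coe] at hS ⊢
      obtain ⟨x, -, rfl⟩ := mem_image.1 (by exact_mod_cast hS : S ∈ orbsR σ a b)
      refine ⟨cls (σ * Equiv.swap a b) x, ?_, ?_⟩
      · exact_mod_cast cls_mem_orbs _ x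
      · ext y
        simp only [mem_filter, mem_univ, true_and, mem_clsR]
        constructor
        · rintro ⟨z, hz, hzy⟩
          exact rel_trans (rel_of_sameCycle_mul_swap (mem_cls.1 hz)) hzy
        · intro hy
          exact ⟨x, self_mem_cls x, hy⟩
    exact Finset.card_le_card_of_surjOn _ hsurj
  have h3 := card_orbsR σ a b
  unfold nOrb at *
  omega

lemma orbs_mul_swap {σ : Perm α} {a b : α} (h : ¬σ.SameCycle a b) :
    orbs (σ * Equiv.swap a b) = orbsR σ a b := by
  unfold orbs orbsR
  apply Finset.image_congr
  intro x _
  ext y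
  rw [mem_cls, mem_clsR, sameCycle_mul_swap_iff h]

lemma cls_ne_cls {σ : Perm α} {a b : α} (h : ¬σ.SameCycle a b) : cls σ a ≠ cls σ b :=
  fun e => h (cls_eq_cls.1 e)

lemma two_le_nOrb {σ : Perm α} {a b : α} (h : ¬σ.SameCycle a b) : 2 ≤ nOrb σ := by
  refine Finset.one_lt_card.2 ⟨cls σ a, cls_mem_orbs σ a, cls σ b, cls_mem_orbs σ b, cls_ne_cls h⟩

lemma nOrb_mul_swap {σ : Perm α} {a b : α} (h : ¬σ.SameCycle a b) :
    nOrb (σ * Equiv.swap a b) + 1 = nOrb σ := by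
  have hAB := cls_ne_cls h
  have h2 := two_le_nOrb h
  have hBmem : cls σ b ∈ (orbs σ).erase (cls σ a) :=
    mem_erase.2 ⟨fun e => hAB e.symm, cls_mem_orbs σ b⟩
  have e1 : ((orbs σ).erase (cls σ a)).card = (orbs σ).card - 1 :=
    card_erase_of_mem (cls_mem_orbs σ a)
  have e2 : (((orbs σ).erase (cls σ a)).erase (cls σ b)).card
      = ((orbs σ).erase (cls σ a)).card - 1 := card_erase_of_mem hBmem
  have e3 := card_orbsR σ a b
  unfold nOrb
  rw [orbs_mul_swap h]
  unfold nOrb at h2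
  omega

lemma pOrb_mul_swap_expl {σ : Perm α} {a b : α} (h : ¬σ.SameCycle a b) :
    pOrb (σ * Equiv.swap a b) =
      ((cls σ a).card + (cls σ b).card) *
        ∏ S ∈ ((orbs σ).erase (cls σ a)).erase (cls σ b), S.card := by
  have hdisj : Disjoint (cls σ a) (cls σ b) := by
    rw [Finset.disjoint_left]
    intro x hxa hxb
    exact h ((mem_cls.1 hxa).trans (mem_cls.1 hxb).symm)
  unfold pOrb
  rw [orbs_mul_swap h, orbsR_eq, Finset.prod_insert (union_not_mem_erase σ a b),
    card_union_of_disjoint hdisj]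

-- ## Summation machinery

lemma sum_comp_cls {σ : Perm α} {t : Finset α} (ht : ∀ x ∈ t, cls σ x ⊆ t)
    (g : Finset α → ℕ) :
    ∑ x ∈ t, g (cls σ x) = ∑ B ∈ t.image (cls σ), B.card * g B := by
  rw [Finset.sum_comp]
  refine sum_congr rfl ?_
  intro B hB
  obtain ⟨x, hx, rfl⟩ := mem_image.1 hB
  have hfe : t.filter (fun y => cls σ y = cls σ x) = cls σ x := by
    ext z
    simp only [mem_filter]
    constructor
    · rintro ⟨-, he⟩
      exact he ▸ self_mem_cls z
    · intro hz
      exact ⟨ht x hx hz, (cls_eq_cls.2 (mem_cls.1 hz)).symm⟩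
  rw [hfe, smul_eq_mul]

lemma sum_card_orbs (σ : Perm α) : ∑ B ∈ orbs σ, B.card = Fintype.card α := by
  have h := sum_comp_cls (σ := σ) (t := univ) (fun _ _ => subset_univ _) (fun _ => 1)
  simp only [mul_one] at h
  unfold orbs
  rw [← h]
  simp [Finset.card_univ]

lemma image_cls_sdiff {σ : Perm α} (a : α) :
    (univ \ cls σ a).image (cls σ) = (orbs σ).erase (cls σ a) := by
  ext B
  constructor
  · intro hB
    obtain ⟨x, hx, rfl⟩ := mem_image.1 hB
    rw [mem_sdiff] at hx
    refine mem_erase.2 ⟨fun e => hx.2 (e ▸ self_mem_cls x), cls_mem_orbs σ x⟩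
  · intro hB
    obtain ⟨hne, hB'⟩ := mem_erase.1 hB
    obtain ⟨x, -, rfl⟩ := mem_image.1 hB'
    refine mem_image.2 ⟨x, ?_, rfl⟩
    rw [mem_sdiff]
    exact ⟨mem_univ x, fun hx => hne (cls_eq_cls.2 (mem_cls.1 hx)).symm⟩

lemma cls_subset_sdiff {σ : Perm α} {a x : α} (hx : x ∈ univ \ cls σ a) :
    cls σ x ⊆ univ \ cls σ a := by
  intro z hz
  rw [mem_sdiff] at hx ⊢
  refine ⟨mem_univ z, fun hza => hx.2 ?_⟩
  exact mem_cls.2 ((mem_cls.1 hza).trans (mem_cls.1 hz).symm)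

def MP (σ : Perm α) : Finset (α × α) :=
  (univ ×ˢ univ).filter (fun p : α × α => ¬σ.SameCycle p.1 p.2)

lemma mem_MP {σ : Perm α} {p : α × α} : p ∈ MP σ ↔ ¬σ.SameCycle p.1 p.2 := by
  simp [MP]

/-- The key summation identity. -/
lemma sum_pOrb_swap (σ : Perm α) :
    ∑ p ∈ MP σ, pOrb (σ * Equiv.swap p.1 p.2)
      = 2 * (Fintype.card α * ((nOrb σ - 1) * pOrb σ)) := by
  classical
  have hfilter : ∀ a : α, univ.filter (fun b => ¬σ.SameCycle a b) = univ \ cls σ a := by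
    intro a
    ext b
    simp [mem_cls, mem_sdiff]
  have hrw : ∑ p ∈ MP σ, pOrb (σ * Equiv.swap p.1 p.2)
      = ∑ a : α, ∑ b ∈ univ \ cls σ a, pOrb (σ * Equiv.swap a b) := by
    unfold MP
    rw [Finset.sum_filter, Finset.sum_product]
    refine sum_congr rfl fun a _ => ?_
    rw [← hfilter a, Finset.sum_filter]
  rw [hrw]
  have hPA : ∀ a : α,
      (∏ S ∈ (orbs σ).erase (cls σ a), S.card) * (cls σ a).card = pOrb σ := fun a =>
    Finset.prod_erase_mul _ _ (cls_mem_orbs σ a)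
  have hinner : ∀ a : α, ∑ b ∈ univ \ cls σ a, pOrb (σ * Equiv.swap a b)
      = (nOrb σ - 1) * pOrb σ
        + (Fintype.card α - (cls σ a).card) * ∏ S ∈ (orbs σ).erase (cls σ a), S.card := by
    intro a
    have hterm : ∀ b ∈ univ \ cls σ a, pOrb (σ * Equiv.swap a b)
        = (cls σ a).card * (∏ S ∈ ((orbs σ).erase (cls σ a)).erase (cls σ b), S.card)
          + ∏ S ∈ (orbs σ).erase (cls σ a), S.card := by
      intro b hb
      rw [mem_sdiff, mem_cls] at hb
      have hnsc : ¬σ.SameCycle a b := hb.2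
      rw [pOrb_mul_swap_expl hnsc, add_mul]
      have hBmem : cls σ b ∈ (orbs σ).erase (cls σ a) :=
        mem_erase.2 ⟨fun e => hnsc (cls_eq_cls.1 e).symm, cls_mem_orbs σ b⟩
      have h2 : (cls σ b).card * ∏ S ∈ ((orbs σ).erase (cls σ a)).erase (cls σ b), S.card
          = ∏ S ∈ (orbs σ).erase (cls σ a), S.card := by
        rw [mul_comm]
        exact Finset.prod_erase_mul _ _ hBmem
      rw [h2]
    rw [Finset.sum_congr rfl hterm, Finset.sum_add_distrib, Finset.sum_const]
    have hc1 : ∑ b ∈ univ \ cls σ a,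
        (cls σ a).card * ∏ S ∈ ((orbs σ).erase (cls σ a)).erase (cls σ b), S.card
        = (nOrb σ - 1) * pOrb σ := by
      rw [← Finset.mul_sum]
      have hg := sum_comp_cls (σ := σ) (t := univ \ cls σ a)
        (fun x hx => cls_subset_sdiff hx)
        (fun B => ∏ S ∈ ((orbs σ).erase (cls σ a)).erase B, S.card)
      rw [hg, image_cls_sdiff]
      have hstep : ∀ B ∈ (orbs σ).erase (cls σ a),
          B.card * ∏ S ∈ ((orbs σ).erase (cls σ a)).erase B, S.card
            = ∏ S ∈ (orbs σ).erase (cls σ a), S.card := by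
        intro B hB
        rw [mul_comm B.card]
        exact Finset.prod_erase_mul _ _ hB
      rw [Finset.sum_congr rfl hstep, Finset.sum_const,
        card_erase_of_mem (cls_mem_orbs σ a), smul_eq_mul]
      unfold nOrb
      rw [← hPA a]
      ring
    rw [hc1, smul_eq_mul]
    congr 1
    rw [Finset.card_sdiff_of_subset (subset_univ _), Finset.card_univ]
  rw [Finset.sum_congr rfl (fun a _ => hinner a), Finset.sum_add_distrib, Finset.sum_const,
    Finset.card_univ, smul_eq_mul]
  have hsecond : ∑ a : α,
      (Fintype.card α - (cls σ a).card) * ∏ S ∈ (orbs σ).erase (cls σ a), S.card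
      = Fintype.card α * ((nOrb σ - 1) * pOrb σ) := by
    have hg := sum_comp_cls (σ := σ) (t := univ) (fun _ _ => subset_univ _)
      (fun B => (Fintype.card α - B.card) * ∏ S ∈ (orbs σ).erase B, S.card)
    rw [hg]
    have hstep : ∀ B ∈ (univ : Finset α).image (cls σ),
        B.card * ((Fintype.card α - B.card) * ∏ S ∈ (orbs σ).erase B, S.card)
          = (Fintype.card α - B.card) * pOrb σ := by
      intro B hB
      have hB' : B ∈ orbs σ := hB
      have hPB : (∏ S ∈ (orbs σ).erase B, S.card) * B.card = pOrb σ :=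
        Finset.prod_erase_mul _ _ hB'
      rw [← hPB]
      ring
    rw [Finset.sum_congr rfl hstep, ← Finset.sum_mul]
    have hkey : ∑ B ∈ (univ : Finset α).image (cls σ), (Fintype.card α - B.card)
        = Fintype.card α * (nOrb σ - 1) := by
      have hle : ∀ B ∈ (univ : Finset α).image (cls σ), B.card ≤ Fintype.card α := by
        intro B _
        rw [← Finset.card_univ]
        exact Finset.card_le_card (subset_univ B)
      rw [Finset.sum_tsub_distrib _ hle, Finset.sum_const, smul_eq_mul]
      have h1 : ∑ B ∈ (univ : Finset α).image (cls σ), B.card = Fintype.card α :=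
        sum_card_orbs σ
      rw [h1]
      have h2 : ((univ : Finset α).image (cls σ)).card = nOrb σ := rfl
      rw [h2, Nat.mul_sub, mul_one, mul_comm (nOrb σ)]
    rw [hkey]
    ring
  rw [hsecond]
  ring

-- ## Doubling over unordered swaps

def T (σ : Perm α) : Finset (Perm α) := (MP σ).image (fun p => Equiv.swap p.1 p.2)

lemma swap_eq_swap_iff {a b c d : α} (hab : a ≠ b) (hcd : c ≠ d) :
    Equiv.swap c d = Equiv.swap a b ↔ (c = a ∧ d = b) ∨ (c = b ∧ d = a) := by
  constructor
  · intro h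
    have h1 : Equiv.swap a b c = d := by rw [← h, Equiv.swap_apply_left]
    by_cases hca : c = a
    · subst hca
      rw [Equiv.swap_apply_left] at h1
      exact Or.inl ⟨rfl, h1.symm⟩
    · by_cases hcb : c = b
      · subst hcb
        rw [Equiv.swap_apply_right] at h1
        exact Or.inr ⟨rfl, h1.symm⟩
      · rw [Equiv.swap_apply_of_ne_of_ne hca hcb] at h1
        exact absurd h1 hcd
  · rintro (⟨rfl, rfl⟩ | ⟨rfl, rfl⟩)
    · rfl
    · exact Equiv.swap_comm c d

lemma ne_of_not_sameCycle {σ : Perm α} {a b : α} (h : ¬σ.SameCycle a b) : a ≠ b :=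
  fun e => h (e ▸ SameCycle.refl σ a)

lemma sum_MP_eq_two_mul (σ : Perm α) (f : Perm α → ℕ) :
    ∑ p ∈ MP σ, f (Equiv.swap p.1 p.2) = 2 * ∑ τ ∈ T σ, f τ := by
  rw [Finset.sum_comp f (fun p : α × α => Equiv.swap p.1 p.2)]
  rw [Finset.mul_sum]
  refine sum_congr rfl ?_
  rintro τ hτ
  obtain ⟨⟨a, b⟩, hp, rfl⟩ := mem_image.1 hτ
  have hab : ¬σ.SameCycle a b := mem_MP.1 hp
  have hne : a ≠ b := ne_of_not_sameCycle hab
  have hfib : (MP σ).filter (fun p : α × α => Equiv.swap p.1 p.2 = Equiv.swap a b)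
      = {(a, b), (b, a)} := by
    ext ⟨c, d⟩
    simp only [mem_filter, mem_MP, mem_insert, mem_singleton, Prod.mk.injEq]
    constructor
    · rintro ⟨hcd, he⟩
      exact (swap_eq_swap_iff hne (ne_of_not_sameCycle hcd)).1 he
    · rintro (⟨rfl, rfl⟩ | ⟨rfl, rfl⟩)
      · exact ⟨hab, rfl⟩
      · exact ⟨fun h' => hab h'.symm, Equiv.swap_comm c d⟩
  rw [hfib]
  have hcard : ({(a, b), (b, a)} : Finset (α × α)).card = 2 := by
    rw [Finset.card_insert_of_notMem, Finset.card_singleton]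
    simp only [mem_singleton, Prod.mk.injEq, not_and]
    intro h'
    exact fun _ => hne h'
  rw [hcard, smul_eq_mul]

-- ## The count of merging factorizations

lemma nat_card_sigma {ι : Type*} [Fintype ι] (f : ι → Type*) [∀ i, Finite (f i)] :
    Nat.card ((i : ι) × f i) = ∑ i, Nat.card (f i) := by
  haveI : ∀ i, Fintype (f i) := fun i => Fintype.ofFinite _
  simp [Nat.card_eq_fintype_card, Fintype.card_sigma]

lemma finite_aux {X : Type*} [Finite X] {P : List X → Prop} {n : ℕ}
    (hlen : ∀ l, P l → l.length = n) : Finite {l : List X // P l} := by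
  refine Finite.of_injective
    (fun l : {l : List X // P l} =>
      (fun i : Fin n => l.1.get (Fin.cast (hlen l.1 l.2).symm i))) ?_
  intro l1 l2 hl
  apply Subtype.ext
  apply List.ext_get (by rw [hlen l1.1 l1.2, hlen l2.1 l2.2])
  intro i h1 h2
  exact congrFun hl ⟨i, by rw [← hlen l1.1 l1.2]; exact h1⟩

/-- `l` is a merging factorization datum for `σ`. -/
def valid (σ : Perm α) (l : List (Perm α)) : Prop :=
  l.length + 1 = nOrb σ ∧ (∀ τ ∈ l, τ.IsSwap) ∧ nOrb (σ * l.prod) = 1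

instance validFinite (σ : Perm α) : Finite {l // valid σ l} :=
  finite_aux (n := nOrb σ - 1) (fun l hl => by have := hl.1; omega)

/-- Number of merging factorizations. -/
noncomputable def H (σ : Perm α) : ℕ := Nat.card {l // valid σ l}

lemma nOrb_le_list (σ : Perm α) (l : List (Perm α)) (hl : ∀ τ ∈ l, τ.IsSwap) :
    nOrb σ ≤ nOrb (σ * l.prod) + l.length := by
  induction l generalizing σ with
  | nil => simp
  | cons τ l' ih =>
    obtain ⟨a, b, hab, rfl⟩ := hl τ List.mem_cons_self
    have h1 := nOrb_le_mul_swap σ a b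
    have h2 := ih (σ * Equiv.swap a b) (fun τ' hτ' => hl τ' (List.mem_cons_of_mem _ hτ'))
    rw [List.prod_cons, ← mul_assoc] at *
    simp only [List.length_cons]
    omega

lemma orbs_of_nOrb_one {σ : Perm α} (h : nOrb σ = 1) : orbs σ = {univ} := by
  obtain ⟨S, hS⟩ := Finset.card_eq_one.1 h
  rw [hS]
  congr 1
  apply Finset.eq_univ_of_forall
  intro y
  have : cls σ y ∈ orbs σ := cls_mem_orbs σ y
  rw [hS, mem_singleton] at this
  rw [← this]
  exact self_mem_cls y

lemma pOrb_of_nOrb_one {σ : Perm α} (h : nOrb σ = 1) : pOrb σ = Fintype.card α := by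
  unfold pOrb
  rw [orbs_of_nOrb_one h, Finset.prod_singleton, Finset.card_univ]

lemma H_of_nOrb_one {σ : Perm α} (h : nOrb σ = 1) : H σ = 1 := by
  haveI : Unique {l // valid σ l} := by
    refine ⟨⟨⟨[], ?_, ?_, ?_⟩⟩, ?_⟩
    · simpa using h.symm
    · intro τ hτ
      simp at hτ
    · simpa using h
    · rintro ⟨l, hl⟩
      apply Subtype.ext
      have := hl.1
      have hlen : l.length = 0 := by omega
      exact List.length_eq_zero_iff.1 hlen
  exact Nat.card_unique

lemma mem_T {σ : Perm α} {τ : Perm α} :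
    τ ∈ T σ ↔ ∃ a b : α, ¬σ.SameCycle a b ∧ τ = Equiv.swap a b := by
  constructor
  · intro hτ
    obtain ⟨⟨a, b⟩, hp, rfl⟩ := mem_image.1 hτ
    exact ⟨a, b, mem_MP.1 hp, rfl⟩
  · rintro ⟨a, b, hab, rfl⟩
    exact mem_image.2 ⟨(a, b), mem_MP.2 hab, rfl⟩

lemma H_step {σ : Perm α} (hσ : 2 ≤ nOrb σ) :
    H σ = ∑ τ ∈ T σ, H (σ * τ) := by
  classical
  have key : ∀ τ ∈ T σ, ∀ l', valid (σ * τ) l' → valid σ (τ :: l') := by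
    intro τ hτ l' hl'
    obtain ⟨a, b, hab, rfl⟩ := mem_T.1 hτ
    refine ⟨?_, ?_, ?_⟩
    · simp only [List.length_cons]
      have := nOrb_mul_swap hab
      have := hl'.1
      omega
    · intro τ' hτ'
      rcases List.mem_cons.1 hτ' with rfl | h'
      · exact ⟨a, b, ne_of_not_sameCycle hab, rfl⟩
      · exact hl'.2.1 τ' h'
    · rw [List.prod_cons, ← mul_assoc]
      exact hl'.2.2
  let F : ((τ : T σ) × {l // valid (σ * τ.1) l}) → {l // valid σ l} :=
    fun x => ⟨x.1.1 :: x.2.1, key x.1.1 x.1.2 x.2.1 x.2.2⟩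
  have hbij : Function.Bijective F := by
    constructor
    · rintro ⟨⟨τ1, h1⟩, ⟨l1, hl1⟩⟩ ⟨⟨τ2, h2⟩, ⟨l2, hl2⟩⟩ he
      simp only [F, Subtype.mk.injEq, List.cons.injEq] at he
      obtain ⟨rfl, rfl⟩ := he
      rfl
    · rintro ⟨l, hl⟩
      obtain ⟨hlen, hsw, hfin⟩ := hl
      match l, hlen with
      | [], hlen => exact absurd hlen (by simp only [List.length_nil]; omega)
      | τ :: l', hlen =>
        obtain ⟨a, b, hne, rfl⟩ := hsw τ List.mem_cons_self
        have hsw' : ∀ τ' ∈ l', τ'.IsSwap := fun τ' h' => hsw τ' (List.mem_cons_of_mem _ h')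
        have hfin' : nOrb (σ * Equiv.swap a b * l'.prod) = 1 := by
          rw [mul_assoc, ← List.prod_cons]
          exact hfin
        have hnsc : ¬σ.SameCycle a b := by
          intro hsc
          have h1 := not_sameCycle_mul_swap σ hne hsc
          have h2 := nOrb_mul_swap h1
          rw [mul_assoc, Equiv.swap_mul_self, mul_one] at h2
          have h3 := nOrb_le_list (σ * Equiv.swap a b) l' hsw'
          rw [hfin'] at h3
          simp only [List.length_cons] at hlen
          omega
        have hτT : Equiv.swap a b ∈ T σ := mem_T.2 ⟨a, b, hnsc, rfl⟩
        have hval : valid (σ * Equiv.swap a b) l' := by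
          refine ⟨?_, hsw', hfin'⟩
          have := nOrb_mul_swap hnsc
          simp only [List.length_cons] at hlen
          omega
        exact ⟨⟨⟨Equiv.swap a b, hτT⟩, ⟨l', hval⟩⟩, rfl⟩
  have hcard : H σ = Nat.card ((τ : T σ) × {l // valid (σ * τ.1) l}) :=
    (Nat.card_congr (Equiv.ofBijective F hbij)).symm
  rw [hcard, nat_card_sigma]
  rw [← Finset.sum_coe_sort (T σ) (fun τ => H (σ * τ))]
  rfl

/-- The master counting formula. -/
lemma master (k : ℕ) : ∀ σ : Perm α, nOrb σ = k + 1 →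
    Fintype.card α * H σ = Nat.factorial k * (Fintype.card α) ^ k * pOrb σ := by
  induction k with
  | zero =>
    intro σ h
    rw [H_of_nOrb_one h, pOrb_of_nOrb_one h]
    simp
  | succ n ih =>
    intro σ h
    rw [H_step (by omega), Finset.mul_sum]
    have hterm : ∀ τ ∈ T σ, Fintype.card α * H (σ * τ)
        = Nat.factorial n * (Fintype.card α) ^ n * pOrb (σ * τ) := by
      intro τ hτ
      obtain ⟨a, b, hab, rfl⟩ := mem_T.1 hτ
      have h1 := nOrb_mul_swap hab
      exact ih _ (by omega)
    rw [Finset.sum_congr rfl hterm]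
    have hsum : ∑ τ ∈ T σ, pOrb (σ * τ) = Fintype.card α * ((n + 1) * pOrb σ) := by
      have hdbl := sum_MP_eq_two_mul σ (fun τ => pOrb (σ * τ))
      rw [sum_pOrb_swap σ, h] at hdbl
      simp only [Nat.add_sub_cancel] at hdbl
      exact (Nat.eq_of_mul_eq_mul_left (by norm_num) hdbl.symm)
    have : ∑ τ ∈ T σ, Nat.factorial n * (Fintype.card α) ^ n * pOrb (σ * τ)
        = Nat.factorial n * (Fintype.card α) ^ n * ∑ τ ∈ T σ, pOrb (σ * τ) := by
      rw [Finset.mul_sum]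
    rw [this, hsum, Nat.factorial_succ, pow_succ]
    ring

-- ## Endgame

lemma allSameCycle_of_nOrb_one {ρ : Perm α} (h : nOrb ρ = 1) : ∀ x y, ρ.SameCycle x y := by
  intro x y
  have h1 : cls ρ x ∈ orbs ρ := cls_mem_orbs ρ x
  rw [orbs_of_nOrb_one h, mem_singleton] at h1
  have : y ∈ cls ρ x := by rw [h1]; exact mem_univ y
  exact mem_cls.1 this

lemma nOrb_eq_one_of_all {ρ : Perm α} (hne : Nonempty α) (hall : ∀ x y, ρ.SameCycle x y) :
    nOrb ρ = 1 := by
  have hcls : ∀ x : α, cls ρ x = univ := by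
    intro x
    apply Finset.eq_univ_of_forall
    intro y
    exact mem_cls.2 (hall x y)
  unfold nOrb orbs
  have : (univ : Finset α).image (cls ρ) = {univ} := by
    rw [Finset.image_congr (g := fun _ => (univ : Finset α)) (fun x _ => hcls x)]
    exact Finset.image_const univ_nonempty _
  rw [this, card_singleton]

lemma nOrb_eq_one_iff {ρ : Perm α} (hD : 2 ≤ Fintype.card α) :
    nOrb ρ = 1 ↔ ρ.cycleType = {Fintype.card α} := by
  haveI : Nonempty α := Fintype.card_pos_iff.1 (by omega : 0 < Fintype.card α)
  constructor
  · intro h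
    have hall := allSameCycle_of_nOrb_one h
    have hne1 : ρ ≠ 1 := by
      rintro rfl
      obtain ⟨x, y, hxy⟩ := Fintype.exists_pair_of_one_lt_card (α := α) (by omega)
      exact hxy (sameCycle_one.1 (hall x y))
    have hmov : ∃ x, ρ x ≠ x := by
      by_contra hcon
      push_neg at hcon
      exact hne1 (Equiv.ext hcon)
    obtain ⟨x, hx⟩ := hmov
    have hcyc : ρ.IsCycle := ⟨x, hx, fun y _ => (hall x y)⟩
    have hsupp : ρ.support = univ := by
      apply Finset.eq_univ_of_forall
      intro y
      rw [Equiv.Perm.mem_support]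
      intro hy
      exact hx (((hall y x).eq_of_left hy) ▸ hy)
    rw [hcyc.cycleType, hsupp, Finset.card_univ]
  · intro h
    have hcyc : ρ.IsCycle := Equiv.Perm.card_cycleType_eq_one.1 (by rw [h]; rfl)
    have hsupp : ρ.support = univ := by
      apply Finset.eq_univ_of_card
      rw [← Equiv.Perm.sum_cycleType, h, Multiset.sum_singleton]
    obtain ⟨z, hz, hzall⟩ := hcyc
    have hmov : ∀ x : α, ρ x ≠ x := by
      intro x
      rw [← Equiv.Perm.mem_support, hsupp]
      exact mem_univ x
    exact nOrb_eq_one_of_all ‹Nonempty α›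
      (fun x y => ((hzall (hmov x)).symm).trans (hzall (hmov y)))

lemma nOrb_one : nOrb (1 : Perm α) = Fintype.card α := by
  have hcls : ∀ x : α, cls (1 : Perm α) x = {x} := by
    intro x
    ext y
    rw [mem_cls, sameCycle_one, mem_singleton]
    exact eq_comm
  unfold nOrb orbs
  rw [Finset.image_congr (g := fun x => ({x} : Finset α)) (fun x _ => hcls x),
    Finset.card_image_of_injective _ Finset.singleton_injective, Finset.card_univ]

lemma pOrb_one : pOrb (1 : Perm α) = 1 := by
  unfold pOrb
  apply Finset.prod_eq_one
  intro S hS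
  obtain ⟨x, -, rfl⟩ := mem_image.1 hS
  have : cls (1 : Perm α) x = {x} := by
    ext y
    rw [mem_cls, sameCycle_one, mem_singleton]
    exact eq_comm
  rw [this, card_singleton]

lemma conj_list_prod (g : Perm α) (l : List (Perm α)) :
    (l.map (fun τ => g * τ * g⁻¹)).prod = g * l.prod * g⁻¹ := by
  induction l with
  | nil => simp
  | cons τ l' ih =>
    simp only [List.map_cons, List.prod_cons, ih]
    group

lemma isSwap_conj {g τ : Perm α} (h : τ.IsSwap) : (g * τ * g⁻¹).IsSwap := by
  obtain ⟨a, b, hab, rfl⟩ := h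
  exact ⟨g a, g b, fun e => hab (g.injective e), (Equiv.swap_apply_apply g a b).symm⟩

/-- number of factorizations of `ρ` into `D - 1` transpositions -/
noncomputable def N (ρ : Perm α) : ℕ :=
  Nat.card {l : List (Perm α) //
    l.length + 1 = Fintype.card α ∧ (∀ τ ∈ l, τ.IsSwap) ∧ l.prod = ρ}

instance NFinite (ρ : Perm α) :
    Finite {l : List (Perm α) //
      l.length + 1 = Fintype.card α ∧ (∀ τ ∈ l, τ.IsSwap) ∧ l.prod = ρ} :=
  finite_aux (n := Fintype.card α - 1) (fun l hl => by have := hl.1; omega)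

lemma N_conj (g ρ : Perm α) : N (g * ρ * g⁻¹) = N ρ := by
  apply Nat.card_congr
  refine ⟨fun x => ⟨x.1.map (fun τ => g⁻¹ * τ * g), ?_⟩,
          fun x => ⟨x.1.map (fun τ => g * τ * g⁻¹), ?_⟩, ?_, ?_⟩
  · obtain ⟨l, h1, h2, h3⟩ := x
    refine ⟨by simpa using h1, ?_, ?_⟩
    · intro τ hτ
      obtain ⟨τ', hτ', rfl⟩ := List.mem_map.1 hτ
      have := isSwap_conj (g := g⁻¹) (h2 τ' hτ')
      simpa using this
    · have := conj_list_prod g⁻¹ l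
      simp only [inv_inv] at this
      rw [this, h3]
      group
  · obtain ⟨l, h1, h2, h3⟩ := x
    refine ⟨by simpa using h1, ?_, ?_⟩
    · intro τ hτ
      obtain ⟨τ', hτ', rfl⟩ := List.mem_map.1 hτ
      exact isSwap_conj (h2 τ' hτ')
    · rw [conj_list_prod g l, h3]
  · rintro ⟨l, h1, h2, h3⟩
    apply Subtype.ext
    simp only [List.map_map]
    rw [show ((fun τ => g * τ * g⁻¹) ∘ (fun τ => g⁻¹ * τ * g)) = id by
      funext τ; simp [mul_assoc], List.map_id]
  · rintro ⟨l, h1, h2, h3⟩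
    apply Subtype.ext
    simp only [List.map_map]
    rw [show ((fun τ => g⁻¹ * τ * g) ∘ (fun τ => g * τ * g⁻¹)) = id by
      funext τ; simp [mul_assoc], List.map_id]

/-- The set of full cycles. -/
def Cyc (α : Type*) [Fintype α] [DecidableEq α] : Finset (Perm α) :=
  univ.filter (fun ρ => ρ.cycleType = {Fintype.card α})

lemma H_one_eq (hD : 2 ≤ Fintype.card α) :
    H (1 : Perm α) = ∑ ρ ∈ Cyc α, N ρ := by
  classical
  have e : {l // valid (1 : Perm α) l} ≃
      ((ρ : Cyc α) × {l : List (Perm α) //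
        l.length + 1 = Fintype.card α ∧ (∀ τ ∈ l, τ.IsSwap) ∧ l.prod = ρ.1}) := by
    refine ⟨fun x => ⟨⟨x.1.prod, ?_⟩, ⟨x.1, ?_, x.2.2.1, rfl⟩⟩,
            fun x => ⟨x.2.1, ?_, x.2.2.2.1, ?_⟩, ?_, ?_⟩
    · obtain ⟨l, h1, h2, h3⟩ := x
      simp only [Cyc, mem_filter, mem_univ, true_and]
      rw [← nOrb_eq_one_iff hD]
      simpa using h3
    · have := x.2.1
      rw [nOrb_one] at this
      exact this
    · rw [nOrb_one]
      exact x.2.2.1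
    · have h3 := x.2.2.2.2
      have hρ := x.1.2
      simp only [Cyc, mem_filter, mem_univ, true_and] at hρ
      rw [nOrb_eq_one_iff hD]
      simpa [h3] using hρ
    · rintro ⟨l, h⟩
      rfl
    · rintro ⟨⟨ρ, hρ⟩, ⟨l, h1, h2, h3⟩⟩
      have h3' : l.prod = ρ := h3
      subst h3'
      rfl
  rw [H, Nat.card_congr e, nat_card_sigma]
  rw [← Finset.sum_coe_sort (Cyc α) N]
  rfl

lemma N_const (hD : 2 ≤ Fintype.card α) {c ρ : Perm α}
    (hc : c.cycleType = {Fintype.card α}) (hρ : ρ ∈ Cyc α) : N ρ = N c := by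
  have hρ' : ρ.cycleType = {Fintype.card α} := by
    simpa [Cyc] using hρ
  have hconj : IsConj c ρ := Equiv.Perm.isConj_iff_cycleType_eq.2 (by rw [hc, hρ'])
  obtain ⟨g, hg⟩ := isConj_iff.1 hconj
  rw [← hg, N_conj]

lemma zpow_total {c : Perm α} (hall : ∀ x y, c.SameCycle x y) {g : Perm α}
    (hcomm : g * c = c * g) (x₀ : α) : g ∈ Subgroup.zpowers c := by
  obtain ⟨k, hk⟩ := hall x₀ (g x₀)
  refine Subgroup.mem_zpowers_iff.2 ⟨k, ?_⟩
  apply Equiv.ext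
  intro y
  obtain ⟨i, hi⟩ := hall x₀ y
  have hcomm' : g * c ^ i = c ^ i * g := Commute.zpow_right hcomm i
  calc (c ^ k) y = (c ^ k) ((c ^ i) x₀) := by rw [hi]
    _ = (c ^ i) ((c ^ k) x₀) := by
        rw [← mul_apply, ← mul_apply, ← zpow_add, ← zpow_add, add_comm]
    _ = (c ^ i) (g x₀) := by rw [hk]
    _ = g ((c ^ i) x₀) := by rw [← mul_apply, ← hcomm', mul_apply]
    _ = g y := by rw [hi]

lemma card_cyc_mul (hD : 2 ≤ Fintype.card α) {c : Perm α}
    (hc : c.cycleType = {Fintype.card α}) :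
    (Cyc α).card * Fintype.card α = Nat.factorial (Fintype.card α) := by
  classical
  haveI : Nonempty α := Fintype.card_pos_iff.1 (by omega : 0 < Fintype.card α)
  obtain ⟨x₀⟩ := ‹Nonempty α›
  have hall : ∀ x y, c.SameCycle x y :=
    allSameCycle_of_nOrb_one ((nOrb_eq_one_iff hD).2 hc)
  -- order of c
  have hcyc : c.IsCycle := Equiv.Perm.card_cycleType_eq_one.1 (by rw [hc]; rfl)
  have hsupp : c.support.card = Fintype.card α := by
    rw [← Equiv.Perm.sum_cycleType, hc, Multiset.sum_singleton]
  have hord : orderOf c = Fintype.card α := by rw [hcyc.orderOf, hsupp]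
  -- stabilizer membership
  have hstab : ∀ g : ConjAct (Perm α),
      g ∈ MulAction.stabilizer (ConjAct (Perm α)) c ↔
        ConjAct.ofConjAct g ∈ Subgroup.zpowers c := by
    intro g
    rw [MulAction.mem_stabilizer_iff, ConjAct.smul_def]
    constructor
    · intro hg
      refine zpow_total hall ?_ x₀
      have := hg
      rw [mul_inv_eq_iff_eq_mul] at this
      exact this
    · intro hg
      obtain ⟨k, hk⟩ := Subgroup.mem_zpowers_iff.1 hg
      rw [← hk]
      rw [mul_inv_eq_iff_eq_mul]
      exact ((Commute.refl c).zpow_left k).eq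
  -- card stabilizer = D
  have hcardstab : Nat.card (MulAction.stabilizer (ConjAct (Perm α)) c) = Fintype.card α := by
    have e : MulAction.stabilizer (ConjAct (Perm α)) c ≃ Subgroup.zpowers c :=
      Equiv.subtypeEquiv (ConjAct.ofConjAct (G := Perm α)).toEquiv (fun g => hstab g)
    rw [Nat.card_congr e, Nat.card_zpowers, hord]
  -- card orbit = card Cyc
  have hcardorb : Nat.card (MulAction.orbit (ConjAct (Perm α)) c) = (Cyc α).card := by
    have e : MulAction.orbit (ConjAct (Perm α)) c ≃
        {ρ : Perm α // ρ.cycleType = {Fintype.card α}} := by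
      refine Equiv.subtypeEquivRight ?_
      intro ρ
      rw [ConjAct.mem_orbit_conjAct]
      rw [isConj_comm, Equiv.Perm.isConj_iff_cycleType_eq, hc]
      exact eq_comm
    rw [Nat.card_congr e, Nat.card_eq_fintype_card, Fintype.card_subtype]
    rfl
  -- orbit stabilizer
  have horbstab : Nat.card (MulAction.orbit (ConjAct (Perm α)) c)
      = (MulAction.stabilizer (ConjAct (Perm α)) c).index := by
    rw [Subgroup.index_eq_card]
    exact Nat.card_congr (MulAction.orbitEquivQuotientStabilizer _ c)
  have hG : Nat.card (ConjAct (Perm α)) = Nat.factorial (Fintype.card α) := by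
    rw [Nat.card_congr (ConjAct.ofConjAct (G := Perm α)).toEquiv,
      Nat.card_eq_fintype_card, Fintype.card_perm]
  have hfull := Subgroup.card_mul_index (MulAction.stabilizer (ConjAct (Perm α)) c)
  rw [← horbstab, hcardorb, hcardstab] at hfull
  rw [mul_comm, hfull, hG]

/-- Dénes' theorem, abstract version. -/
theorem denes {c : Perm α} (hc : c.cycleType = {Fintype.card α}) :
    N c = Fintype.card α ^ (Fintype.card α - 2) := by
  classical
  have hD : 2 ≤ Fintype.card α := by
    have := Equiv.Perm.two_le_of_mem_cycleType (by rw [hc]; exact Multiset.mem_singleton_self _)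
    exact this
  set D := Fintype.card α with hDdef
  have hmaster := master (D - 1) (1 : Perm α) (by rw [nOrb_one]; omega)
  rw [pOrb_one, mul_one, H_one_eq hD] at hmaster
  rw [Finset.sum_congr rfl (fun ρ hρ => N_const hD hc hρ), Finset.sum_const, smul_eq_mul]
    at hmaster
  -- D * (|Cyc| * N c) = (D-1)! * D^(D-1)
  have hcc := card_cyc_mul hD hc
  have hkey : Nat.factorial D * N c = Nat.factorial D * D ^ (D - 2) := by
    have h1 : D * ((Cyc α).card * N c) = ((Cyc α).card * D) * N c := by ring
    rw [h1, hcc] at hmaster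
    rw [hmaster]
    have h2 : D ^ (D - 1) = D * D ^ (D - 2) := by
      have : D - 1 = (D - 2) + 1 := by omega
      rw [this, pow_succ]
      ring
    rw [h2]
    have h3 : Nat.factorial D = D * Nat.factorial (D - 1) := by
      have : D = (D - 1) + 1 := by omega
      rw [this]
      rw [Nat.factorial_succ]
      congr 1 <;> omega
    rw [h3]
    ring
  exact Nat.eq_of_mul_eq_mul_left (Nat.factorial_pos D) hkey

end Denes

/-- Dénes' theorem: the number of ordered factorizations of a fixed `d`-cycle
in `S_d` as a product of `d - 1` transpositions is `d ^ (d - 2)`. -/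
theorem stmt17 (d : ℕ) (c : Equiv.Perm (Fin d)) (hc : c.cycleType = {d}) :
    Nat.card {l : List (Equiv.Perm (Fin d)) //
      l.length = d - 1 ∧ (∀ τ ∈ l, τ.IsSwap) ∧ l.prod = c} = d ^ (d - 2) := by
  have hd2 : 2 ≤ d :=
    Equiv.Perm.two_le_of_mem_cycleType (by rw [hc]; exact Multiset.mem_singleton_self _)
  have hcard : Fintype.card (Fin d) = d := Fintype.card_fin d
  have hc' : c.cycleType = {Fintype.card (Fin d)} := by rw [hcard]; exact hc
  have := Denes.denes hc'
  rw [Denes.N] at this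
  rw [hcard] at this
  rw [← this]
  apply Nat.card_congr
  apply Equiv.subtypeEquivRight
  intro l
  constructor
  · rintro ⟨h1, h2, h3⟩
    exact ⟨by omega, h2, h3⟩
  · rintro ⟨h1, h2, h3⟩
    exact ⟨by omega, h2, h3⟩
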